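/- arXiv:2501.12579 — 2 statements merged into one kernel-verified Lean document; each statement's English description precedes it below -/
import Mathlib

section
/- Let a ∈ {0,1}^ℤ have finite support, let J̃_ℓ be the operator on the fermionic Fock space that sums a†_{k+ℓ} a_k only over k > i*, and let x, y ∈ {0,1}^ℤ be finitely supported bit strings agreeing on all indices i ≤ i*. If x', y' are obtained from x, y by setting all bits at indices ≤ i* to zero, then ⟨y| ∏_j J_{ν_j} |x⟩ = ⟨y'| ∏_j J_{ν_j} |x'⟩, where J_ℓ = ∑_{k∈ℤ} a†_{k+ℓ} a_k and ν_j ≥ 1. -/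
/-! Fermionic Fock space on modes indexed by `ℤ`, modelled as the free
`ℂ`-module on occupation-number basis states, where a basis state is the
(finite) set of occupied modes.  Creation/annihilation operators are defined
with the Jordan–Wigner signs, so they satisfy the canonical anticommutation
relations. -/

noncomputable section

/-- The fermionic Fock space: the free `ℂ`-module with basis the finitely
supported occupation bit strings `x ∈ {0,1}^ℤ`, identified with the finite
sets of occupied modes. -/
abbrev FockSpace : Type := (Finset ℤ) →₀ ℂ

/-- Jordan–Wigner sign: `(−1)` to the number of occupied modes below `k`. -/
def jwSign (s : Finset ℤ) (k : ℤ) : ℂ := (-1) ^ (s.filter fun j => j < k).card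

/-- The fermionic annihilation operator `a_k`. -/
def annihilate (k : ℤ) : Module.End ℂ FockSpace :=
  Finsupp.lift FockSpace ℂ (Finset ℤ) fun s =>
    if k ∈ s then jwSign s k • Finsupp.single (s.erase k) 1 else 0

/-- The fermionic creation operator `a†_k`. -/
def create (k : ℤ) : Module.End ℂ FockSpace :=
  Finsupp.lift FockSpace ℂ (Finset ℤ) fun s =>
    if k ∈ s then 0 else jwSign s k • Finsupp.single (insert k s) 1

/-- The current operator `J_ℓ = ∑_{k ∈ ℤ} a†_{k+ℓ} a_k` (on each basis state
only the finitely many occupied modes `k` contribute). -/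
def current (ℓ : ℤ) : Module.End ℂ FockSpace :=
  Finsupp.lift FockSpace ℂ (Finset ℤ) fun s =>
    ∑ k ∈ s, create (k + ℓ) (annihilate k (Finsupp.single s 1))

namespace Tr
variable (istar : ℤ)

def below (s : Finset ℤ) : Finset ℤ := s.filter (· ≤ istar)

def Big (L₀ : Finset ℤ) (s : Finset ℤ) : Prop :=
  (below istar s).card < L₀.card ∨
  ((below istar s).card = L₀.card ∧ (L₀.sum id : ℤ) < (below istar s).sum id)

lemma below_move (s : Finset ℤ) (k ℓ : ℤ) (hks : k ∈ s) (hnot : k + ℓ ∉ s) (hℓ : 1 ≤ ℓ) :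
    (below istar (insert (k+ℓ) (s.erase k)) = below istar s)
  ∨ (k ≤ istar ∧ (below istar (insert (k+ℓ) (s.erase k))).card = (below istar s).card
      ∧ (below istar s).sum id < (below istar (insert (k+ℓ) (s.erase k))).sum id)
  ∨ (k ≤ istar ∧ (below istar (insert (k+ℓ) (s.erase k))).card < (below istar s).card) := by
  by_cases hk2 : k ≤ istar
  · have hkb : k ∈ below istar s := Finset.mem_filter.2 ⟨hks, hk2⟩
    have hcardpos : 1 ≤ (below istar s).card := Finset.card_pos.2 ⟨k, hkb⟩
    by_cases hkl : k + ℓ ≤ istar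
    · right; left
      have h1 : below istar (insert (k+ℓ) (s.erase k)) = insert (k+ℓ) ((below istar s).erase k) := by
        rw [below, Finset.filter_insert, if_pos hkl, Finset.filter_erase]; rfl
      have hnotin : k + ℓ ∉ (below istar s).erase k := fun h =>
        hnot (Finset.mem_of_mem_filter _ (Finset.mem_of_mem_erase h))
      refine ⟨hk2, ?_, ?_⟩
      · rw [h1, Finset.card_insert_of_notMem hnotin, Finset.card_erase_of_mem hkb]
        omega
      · rw [h1, Finset.sum_insert hnotin]
        have := Finset.sum_erase_add (below istar s) (id : ℤ → ℤ) hkb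
        simp only [id] at this ⊢
        omega
    · right; right
      have h1 : below istar (insert (k+ℓ) (s.erase k)) = (below istar s).erase k := by
        rw [below, Finset.filter_insert, if_neg hkl, Finset.filter_erase]; rfl
      refine ⟨hk2, ?_⟩
      rw [h1, Finset.card_erase_of_mem hkb]
      omega
  · left
    have hkl : ¬ (k + ℓ ≤ istar) := by omega
    have hkb : k ∉ below istar s := fun h => hk2 (Finset.mem_filter.1 h).2
    rw [below, Finset.filter_insert, if_neg hkl, Finset.filter_erase]
    exact Finset.erase_eq_of_notMem hkb

lemma big_move (L₀ s : Finset ℤ) (k ℓ : ℤ) (hks : k ∈ s) (hnot : k + ℓ ∉ s) (hℓ : 1 ≤ ℓ)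
    (hB : Big istar L₀ s) : Big istar L₀ (insert (k+ℓ) (s.erase k)) := by
  rcases below_move istar s k ℓ hks hnot hℓ with h | ⟨_, h1, h2⟩ | ⟨_, h1⟩
  · rwa [Big, h]
  · rcases hB with h | ⟨he, hs⟩
    · exact Or.inl (by omega)
    · exact Or.inr ⟨by omega, by omega⟩
  · rcases hB with h | ⟨he, _⟩
    · exact Or.inl (by omega)
    · exact Or.inl (by omega)

lemma big_move_strict (L₀ s : Finset ℤ) (k ℓ : ℤ) (hks : k ∈ s) (hnot : k + ℓ ∉ s)
    (hℓ : 1 ≤ ℓ) (hk2 : k ≤ istar) (hbel : below istar s = L₀) :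
    Big istar L₀ (insert (k+ℓ) (s.erase k)) := by
  rcases below_move istar s k ℓ hks hnot hℓ with h | ⟨_, h1, h2⟩ | ⟨_, h1⟩
  · exfalso
    have hkb : k ∈ below istar s := Finset.mem_filter.2 ⟨hks, hk2⟩
    have : k ∈ below istar (insert (k+ℓ) (s.erase k)) := h ▸ hkb
    have := (Finset.mem_filter.1 this).1
    rcases Finset.mem_insert.1 this with h' | h'
    · omega
    · exact (Finset.mem_erase.1 h').1 rfl
  · exact Or.inr ⟨by rw [h1, hbel], by rw [← hbel]; exact h2⟩
  · exact Or.inl (by rw [← hbel]; exact h1)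

lemma annihilate_single (k : ℤ) (s : Finset ℤ) :
    annihilate k (Finsupp.single s 1) =
    if k ∈ s then jwSign s k • Finsupp.single (s.erase k) 1 else 0 := by
  rw [annihilate, Finsupp.lift_apply, Finsupp.sum_single_index (by simp), one_smul]

lemma create_single (k : ℤ) (s : Finset ℤ) :
    create k (Finsupp.single s 1) =
    if k ∈ s then 0 else jwSign s k • Finsupp.single (insert k s) 1 := by
  rw [create, Finsupp.lift_apply, Finsupp.sum_single_index (by simp), one_smul]

lemma current_single (ℓ : ℤ) (s : Finset ℤ) :
    current ℓ (Finsupp.single s 1) =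
      ∑ k ∈ s, (if k + ℓ ∈ s.erase k then (0:FockSpace) else
        (jwSign s k * jwSign (s.erase k) (k + ℓ)) •
          Finsupp.single (insert (k + ℓ) (s.erase k)) 1) := by
  rw [current, Finsupp.lift_apply, Finsupp.sum_single_index (by simp), one_smul]
  refine Finset.sum_congr rfl fun k hk => ?_
  rw [annihilate_single, if_pos hk, map_smul, create_single]
  split_ifs with h
  · simp
  · rw [smul_smul]
lemma jwSign_union (L₀ s : Finset ℤ) (m : ℤ) (hd : Disjoint L₀ s) (hL : ∀ i ∈ L₀, i < m) :
    jwSign (L₀ ∪ s) m = (-1) ^ L₀.card * jwSign s m := by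
  rw [jwSign, jwSign, Finset.filter_union, Finset.filter_true_of_mem hL,
    Finset.card_union_of_disjoint (hd.mono_right (Finset.filter_subset _ _)), pow_add]

lemma below_union (istar : ℤ) (L₀ s : Finset ℤ) (hL₀ : ∀ i ∈ L₀, i ≤ istar)
    (hs : ∀ i ∈ s, istar < i) : (L₀ ∪ s).filter (· ≤ istar) = L₀ := by
  rw [Finset.filter_union, Finset.filter_true_of_mem hL₀,
    Finset.filter_false_of_mem (fun i hi => not_le.2 (hs i hi)), Finset.union_empty]

def W (istar : ℤ) (L₀ : Finset ℤ) : Submodule ℂ FockSpace :=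
  Finsupp.supported ℂ ℂ {s | ((s.filter (· ≤ istar)).card < L₀.card ∨
    ((s.filter (· ≤ istar)).card = L₀.card ∧ (L₀.sum id : ℤ) < (s.filter (· ≤ istar)).sum id))}

def A (istar : ℤ) : Submodule ℂ FockSpace :=
  Finsupp.supported ℂ ℂ {s | ∀ i ∈ s, istar < i}

def Ψ (L₀ : Finset ℤ) : FockSpace →ₗ[ℂ] FockSpace :=
  Finsupp.lift FockSpace ℂ (Finset ℤ) fun s => Finsupp.single (L₀ ∪ s) 1

lemma psi_single (L₀ s : Finset ℤ) :
    Ψ L₀ (Finsupp.single s 1) = Finsupp.single (L₀ ∪ s) 1 := by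
  rw [Ψ, Finsupp.lift_apply, Finsupp.sum_single_index (by simp), one_smul]

lemma single_mem_supported' (S : Set (Finset ℤ)) (s : Finset ℤ) (hs : s ∈ S) (c : ℂ) :
    c • Finsupp.single s 1 ∈ Finsupp.supported ℂ ℂ S :=
  Submodule.smul_mem _ _ (Finsupp.single_mem_supported ℂ 1 hs)

/-- helper: to prove `T f ∈ V` for `f` supported on `S`, check generators. -/
lemma map_supported_mem {S : Set (Finset ℤ)} (T : FockSpace →ₗ[ℂ] FockSpace)
    (V : Submodule ℂ FockSpace)
    (h : ∀ s ∈ S, T (Finsupp.single s 1) ∈ V)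
    (f : FockSpace) (hf : f ∈ Finsupp.supported ℂ ℂ S) : T f ∈ V := by
  rw [Finsupp.supported_eq_span_single] at hf
  induction hf using Submodule.span_induction with
  | mem g hg => obtain ⟨s, hs, rfl⟩ := hg; exact h s hs
  | zero => simp
  | add a b _ _ ha hb => rw [map_add]; exact V.add_mem ha hb
  | smul c a _ ha => rw [map_smul]; exact V.smul_mem c ha

lemma current_W (istar ℓ : ℤ) (L₀ : Finset ℤ) (hℓ : 1 ≤ ℓ) (f : FockSpace)
    (hf : f ∈ W istar L₀) : current ℓ f ∈ W istar L₀ := by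
  refine map_supported_mem (current ℓ) _ (fun s hs => ?_) f hf
  rw [current_single]
  refine Submodule.sum_mem _ (fun k hk => ?_)
  split_ifs with h
  · exact Submodule.zero_mem _
  · have hnot : k + ℓ ∉ s := fun hmem => h (Finset.mem_erase.2 ⟨by omega, hmem⟩)
    exact single_mem_supported' _ _ (big_move istar L₀ s k ℓ hk hnot hℓ hs) _

lemma current_A (istar ℓ : ℤ) (hℓ : 1 ≤ ℓ) (f : FockSpace) (hf : f ∈ A istar) :
    current ℓ f ∈ A istar := by
  refine map_supported_mem (current ℓ) _ (fun s hs => ?_) f hf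
  rw [current_single]
  refine Submodule.sum_mem _ (fun k hk => ?_)
  split_ifs with h
  · exact Submodule.zero_mem _
  · have hmem : insert (k + ℓ) (s.erase k) ∈ {s : Finset ℤ | ∀ i ∈ s, istar < i} := by
      intro i hi
      rcases Finset.mem_insert.1 hi with rfl | hi
      · have := hs k hk; omega
      · exact hs i (Finset.mem_of_mem_erase hi)
    exact single_mem_supported' _ _ hmem _

lemma comm_W (istar ℓ : ℤ) (L₀ : Finset ℤ) (hℓ : 1 ≤ ℓ) (hL₀ : ∀ i ∈ L₀, i ≤ istar)
    (f : FockSpace) (hf : f ∈ A istar) :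
    current ℓ (Ψ L₀ f) - Ψ L₀ (current ℓ f) ∈ W istar L₀ := by
  have H := map_supported_mem ((current ℓ) ∘ₗ (Ψ L₀) - (Ψ L₀) ∘ₗ (current ℓ))
    (W istar L₀) ?_ f hf
  · simpa using H
  intro s hs
  have hs' : ∀ i ∈ s, istar < i := hs
  have hd : Disjoint L₀ s := Finset.disjoint_left.2 fun {i} hiL his =>
    absurd (hs' i his) (not_lt.2 (hL₀ i hiL))
  simp only [LinearMap.sub_apply, LinearMap.comp_apply]
  rw [psi_single, current_single, current_single, map_sum,
    Finset.sum_union hd]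
  have hsum : ∀ k ∈ s,
      (if k + ℓ ∈ (L₀ ∪ s).erase k then (0:FockSpace) else
        (jwSign (L₀ ∪ s) k * jwSign ((L₀ ∪ s).erase k) (k + ℓ)) •
          Finsupp.single (insert (k + ℓ) ((L₀ ∪ s).erase k)) 1) =
      Ψ L₀ (if k + ℓ ∈ s.erase k then (0:FockSpace) else
        (jwSign s k * jwSign (s.erase k) (k + ℓ)) •
          Finsupp.single (insert (k + ℓ) (s.erase k)) 1) := by
    intro k hk
    have hik : istar < k := hs' k hk
    have hkL : k ∉ L₀ := fun h => absurd (hL₀ k h) (not_le.2 hik)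
    have hklL : k + ℓ ∉ L₀ := fun h => absurd (hL₀ _ h) (by omega)
    have herase : (L₀ ∪ s).erase k = L₀ ∪ s.erase k := by
      rw [Finset.erase_union_distrib, Finset.erase_eq_of_notMem hkL]
    have hguard : (k + ℓ ∈ (L₀ ∪ s).erase k) ↔ (k + ℓ ∈ s.erase k) := by
      rw [herase, Finset.mem_union]
      exact ⟨fun h => h.resolve_left hklL, Or.inr⟩
    rw [apply_ite (Ψ L₀), map_zero, map_smul, psi_single]
    refine if_congr hguard rfl ?_
    have hdL : Disjoint L₀ (s.erase k) := hd.mono_right (Finset.erase_subset _ _)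
    have hsets : insert (k + ℓ) ((L₀ ∪ s).erase k) = L₀ ∪ insert (k + ℓ) (s.erase k) := by
      rw [herase, Finset.union_insert]
    have hsign : jwSign (L₀ ∪ s) k * jwSign ((L₀ ∪ s).erase k) (k + ℓ) =
        jwSign s k * jwSign (s.erase k) (k + ℓ) := by
      rw [herase, jwSign_union L₀ s k hd (fun i hi => lt_of_le_of_lt (hL₀ i hi) hik),
        jwSign_union L₀ (s.erase k) (k + ℓ) hdL
          (fun i hi => by have := hL₀ i hi; omega)]
      have h1 : ((-1:ℂ)) ^ L₀.card * (-1) ^ L₀.card = 1 := by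
        rw [← pow_add, ← two_mul, pow_mul, neg_one_sq, one_pow]
      calc ((-1:ℂ)) ^ L₀.card * jwSign s k * ((-1) ^ L₀.card * jwSign (s.erase k) (k + ℓ))
          = ((-1:ℂ)) ^ L₀.card * (-1) ^ L₀.card * (jwSign s k * jwSign (s.erase k) (k + ℓ)) := by
            ring
        _ = jwSign s k * jwSign (s.erase k) (k + ℓ) := by rw [h1, one_mul]
    rw [hsets, hsign]
  rw [Finset.sum_congr rfl hsum, add_sub_cancel_right]
  refine Submodule.sum_mem _ (fun k hk => ?_)
  split_ifs with h
  · exact Submodule.zero_mem _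
  · have hnot : k + ℓ ∉ L₀ ∪ s := fun hmem => h (Finset.mem_erase.2 ⟨by omega, hmem⟩)
    have hbel : below istar (L₀ ∪ s) = L₀ := below_union istar L₀ s hL₀ hs'
    exact single_mem_supported' _ _
      (big_move_strict istar L₀ (L₀ ∪ s) k ℓ (Finset.mem_union_left _ hk) hnot hℓ
        (hL₀ k hk) hbel) _

lemma main_ind (istar : ℤ) (L₀ : Finset ℤ) (hL₀ : ∀ i ∈ L₀, i ≤ istar)
    (νz : List ℤ) (hν : ∀ ℓ ∈ νz, (1:ℤ) ≤ ℓ) (f : FockSpace) (hf : f ∈ A istar) :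
    (νz.map current).prod f ∈ A istar ∧
    ((νz.map current).prod (Ψ L₀ f) -
      Ψ L₀ ((νz.map current).prod f)) ∈ W istar L₀ := by
  induction νz with
  | nil =>
    constructor
    · simpa using hf
    · simp only [List.map_nil, List.prod_nil, Module.End.one_apply, sub_self]
      exact Submodule.zero_mem _
  | cons ℓ νz ih =>
    obtain ⟨h1, h2⟩ := ih (fun m hm => hν m (List.mem_cons_of_mem _ hm))
    have hℓ : (1:ℤ) ≤ ℓ := hν ℓ (List.mem_cons_self ..)
    simp only [List.map_cons, List.prod_cons, Module.End.mul_apply]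
    refine ⟨current_A istar _ hℓ _ h1, ?_⟩
    have e1 : current ℓ ((νz.map current).prod (Ψ L₀ f)) -
        current ℓ (Ψ L₀ ((νz.map current).prod f)) ∈ W istar L₀ := by
      rw [← map_sub]; exact current_W istar _ L₀ hℓ _ h2
    have e2 := comm_W istar ℓ L₀ hℓ hL₀ _ h1
    have := Submodule.add_mem _ e1 e2
    rwa [sub_add_sub_cancel] at this

lemma psi_apply (istar : ℤ) (L₀ : Finset ℤ) (hL₀ : ∀ i ∈ L₀, i ≤ istar) (y : Finset ℤ)
    (hy : y.filter (· ≤ istar) = L₀) (f : FockSpace) (hf : f ∈ A istar) :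
    (Ψ L₀ f) y = f (y.filter fun i => istar < i) := by
  rw [A, Finsupp.supported_eq_span_single] at hf
  induction hf using Submodule.span_induction with
  | mem g hg =>
    obtain ⟨s, hs, rfl⟩ := hg
    have hs' : ∀ i ∈ s, istar < i := hs
    have hiff : (L₀ ∪ s = y) ↔ (s = y.filter fun i => istar < i) := by
      constructor
      · rintro rfl
        rw [Finset.filter_union, Finset.filter_false_of_mem
          (fun i hi => not_lt.2 (hL₀ i hi)), Finset.filter_true_of_mem hs',
          Finset.empty_union]
      · rintro rfl
        have h2 : y.filter (fun i => istar < i) = y.filter (fun i => ¬ i ≤ istar) :=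
          Finset.filter_congr (fun i _ => by simp [not_le])
        rw [h2, ← hy, Finset.filter_union_filter_not_eq]
    rw [psi_single, Finsupp.single_apply, Finsupp.single_apply, if_congr hiff rfl rfl]
  | zero => simp
  | add a b _ _ ha hb => rw [map_add, Finsupp.add_apply, Finsupp.add_apply, ha, hb]
  | smul c a _ ha => rw [map_smul, Finsupp.smul_apply, Finsupp.smul_apply, ha]

end Tr

open Tr in
/-- **Truncation lemma for current matrix elements.**
If the finitely supported bit strings `x, y ∈ {0,1}^ℤ` agree on all modes
`i ≤ i*`, and `x', y'` are obtained from `x, y` by setting all bits at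
indices `≤ i*` to zero, then
`⟨y| ∏_j J_{ν_j} |x⟩ = ⟨y'| ∏_j J_{ν_j} |x'⟩` for any finite sequence of
positive integers `ν₁, …, ν_c`. -/
theorem current_matrix_element_truncation
    (x y : Finset ℤ) (istar : ℤ)
    (hagree : ∀ i : ℤ, i ≤ istar → (i ∈ x ↔ i ∈ y))
    (ν : List ℕ) (hν : ∀ ℓ ∈ ν, 1 ≤ ℓ) :
    ((ν.map fun ℓ => current (ℓ : ℤ)).prod (Finsupp.single x 1)) y =
    ((ν.map fun ℓ => current (ℓ : ℤ)).prod
        (Finsupp.single (x.filter fun i => istar < i) 1))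
      (y.filter fun i => istar < i) := by
  have hdo : (ν.map fun ℓ => current (ℓ : ℤ)) = (ν.map (fun n : ℕ => (n:ℤ))).map current := by
    induction ν with
    | nil => rfl
    | cons a l ih => simpa using ih (fun m hm => hν m (List.mem_cons_of_mem _ hm))
  rw [hdo]
  set νz : List ℤ := ν.map (fun n : ℕ => (n:ℤ)) with hνzdef
  have hνz : ∀ ℓ ∈ νz, (1:ℤ) ≤ ℓ := by
    intro ℓ hℓ
    rw [hνzdef, List.mem_map] at hℓ
    obtain ⟨n, hn, rfl⟩ := hℓ
    exact_mod_cast hν n hn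
  set L₀ : Finset ℤ := x.filter (· ≤ istar) with hL₀def
  set x' : Finset ℤ := x.filter (fun i => istar < i) with hx'def
  have hL₀ : ∀ i ∈ L₀, i ≤ istar := fun i hi => (Finset.mem_filter.1 hi).2
  have hx'mem : x' ∈ {s : Finset ℤ | ∀ i ∈ s, istar < i} :=
    fun i hi => (Finset.mem_filter.1 hi).2
  have hx'A : Finsupp.single x' (1:ℂ) ∈ A istar :=
    Finsupp.single_mem_supported ℂ 1 hx'mem
  have hxsplit : L₀ ∪ x' = x := by
    have h2 : x.filter (fun i => istar < i) = x.filter (fun i => ¬ i ≤ istar) :=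
      Finset.filter_congr (fun i _ => by simp [not_le])
    rw [hx'def, hL₀def, h2, Finset.filter_union_filter_not_eq]
  have hyfilter : y.filter (· ≤ istar) = L₀ := by
    rw [hL₀def]
    ext i
    simp only [Finset.mem_filter]
    exact ⟨fun ⟨h1, h2⟩ => ⟨(hagree i h2).2 h1, h2⟩, fun ⟨h1, h2⟩ => ⟨(hagree i h2).1 h1, h2⟩⟩
  obtain ⟨hA, hW⟩ := main_ind istar L₀ hL₀ νz hνz (Finsupp.single x' 1) hx'A
  have hx : Finsupp.single x (1:ℂ) = Ψ L₀ (Finsupp.single x' 1) := by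
    rw [psi_single, hxsplit]
  rw [hx]
  have hsplit : ((νz.map current).prod (Ψ L₀ (Finsupp.single x' 1))) y =
      (Ψ L₀ ((νz.map current).prod (Finsupp.single x' 1))) y +
      (((νz.map current).prod (Ψ L₀ (Finsupp.single x' 1)) -
        Ψ L₀ ((νz.map current).prod (Finsupp.single x' 1)))) y := by
    rw [Finsupp.sub_apply]; ring
  have hwzero : (((νz.map current).prod (Ψ L₀ (Finsupp.single x' 1)) -
        Ψ L₀ ((νz.map current).prod (Finsupp.single x' 1)))) y = 0 := by
    by_contra hne
    rw [W, Finsupp.mem_supported] at hW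
    have hmem := hW (Finset.mem_coe.2 (Finsupp.mem_support_iff.2 hne))
    have hyb : (y.filter (· ≤ istar)).card = L₀.card ∧
        (L₀.sum id : ℤ) = (y.filter (· ≤ istar)).sum id := by rw [hyfilter]; exact ⟨rfl, rfl⟩
    rcases hmem with h | ⟨_, h⟩ <;> omega
  rw [hsplit, hwzero, add_zero, psi_apply istar L₀ hL₀ y hyfilter _ hA]

end
end

section
/- The number of cycles c(g) of a uniformly random permutation g ∈ S_n satisfies, for every ℓ ≥ 1, Pr[c(g) ≥ 1 + ℓ·H_n] ≤ 2·e^{1 − (ℓ log ℓ − ℓ + 1)·H_n}, where H_n = ∑_{j=1}^n 1/j. -/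
open Equiv Equiv.Perm Finset

section Aux

variable {α : Type*} [DecidableEq α] [Fintype α]

/-- Number of cycles of a permutation, counting fixed points as cycles. -/
def cyc (f : Perm α) : ℕ :=
  Multiset.card f.cycleType + (Fintype.card α - f.cycleType.sum)

lemma cyc_sum_le (f : Perm α) : f.cycleType.sum ≤ Fintype.card α := by
  rw [Equiv.Perm.sum_cycleType]; exact f.support.card_le_univ

lemma swap_mul_isCycle {σ : Perm α} (hσ : σ.IsCycle) {a b : α}
    (ha : σ a = a) (hb : σ b ≠ b) :
    IsCycle (swap a b * σ) ∧ (swap a b * σ).support = insert a σ.support := by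
  have hmem : b ∈ σ.support := mem_support.mpr hb
  have hlen : 2 ≤ (σ.toList b).length :=
    Equiv.Perm.two_le_length_toList_iff_mem_support.mpr hmem
  have hnd : (σ.toList b).Nodup := Equiv.Perm.nodup_toList σ b
  have hfp : (σ.toList b).formPerm = σ := by
    rw [Equiv.Perm.formPerm_toList, hσ.cycleOf_eq hb]
  have hsupp' := List.support_formPerm_of_nodup _ hnd
    (fun x => Equiv.Perm.toList_ne_singleton σ b x)
  have hsupp : σ.support = (σ.toList b).toFinset := by rw [← hsupp', hfp]
  have hal : a ∉ σ.toList b := by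
    intro hmem'
    have : a ∈ σ.support := by rw [hsupp]; exact List.mem_toFinset.mpr hmem'
    exact (mem_support.mp this) ha
  have hne : σ.toList b ≠ [] := by
    intro h; rw [h] at hlen; simp at hlen
  obtain ⟨y, t, hyt⟩ := List.exists_cons_of_ne_nil hne
  have hy : y = b := by
    have h0 := Equiv.Perm.toList_getElem_zero (p := σ) (x := b) hmem
    simp only [List.get_eq_getElem, hyt, List.getElem_cons_zero] at h0
    exact h0
  rw [hy] at hyt
  have key : swap a b * σ = (a :: σ.toList b).formPerm := by
    rw [hyt, List.formPerm_cons_cons, ← hyt, hfp]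
  have hndL : (a :: σ.toList b).Nodup := List.nodup_cons.mpr ⟨hal, hnd⟩
  constructor
  · rw [key]
    exact List.isCycle_formPerm hndL (by simp only [List.length_cons]; omega)
  · rw [key, List.support_formPerm_of_nodup _ hndL, List.toFinset_cons, hsupp]
    intro x hx
    have hx' := congrArg List.length hx
    simp only [List.length_cons, List.length_singleton, List.length_nil] at hx'
    omega

lemma cyc_swap_mul {f : Perm α} {a b : α} (ha : f a = a) (hab : a ≠ b) :
    cyc (swap a b * f) + 1 = cyc f := by
  by_cases hb : f b = b
  · -- disjoint case: swap a b is disjoint from f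
    have hdis : Disjoint (swap a b) f := by
      intro x
      by_cases hxa : x = a
      · right; rw [hxa, ha]
      by_cases hxb : x = b
      · right; rw [hxb, hb]
      · left; exact swap_apply_of_ne_of_ne hxa hxb
    have hct : (swap a b * f).cycleType = {2} + f.cycleType := by
      rw [hdis.cycleType_mul, (isCycle_swap hab).cycleType, support_swap hab,
        Finset.card_insert_of_notMem (by simpa using hab), Finset.card_singleton]
    have hle := cyc_sum_le (swap a b * f)
    rw [hct] at hle
    simp only [Multiset.sum_add, Multiset.sum_singleton] at hle
    unfold cyc
    rw [hct]
    simp only [Multiset.card_add, Multiset.card_singleton, Multiset.sum_add,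
      Multiset.sum_singleton]
    omega
  · -- b is moved by f
    set σ := f.cycleOf b with hσdef
    have hσc : σ.IsCycle := isCycle_cycleOf f hb
    have hmemf : σ ∈ f.cycleFactorsFinset :=
      cycleOf_mem_cycleFactorsFinset_iff.mpr (mem_support.mpr hb)
    have hdis : Disjoint (f * σ⁻¹) σ :=
      disjoint_mul_inv_of_mem_cycleFactorsFinset hmemf
    set τ := f * σ⁻¹ with hτdef
    have hfeq : f = τ * σ := by rw [hτdef, inv_mul_cancel_right]
    have hσa : σ a = a := by
      rw [hσdef, cycleOf_apply]; split <;> simp [ha]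
    have hσb : σ b ≠ b := by rwa [hσdef, cycleOf_apply_self]
    have hσinva : σ⁻¹ a = a := by
      have h : σ⁻¹ (σ a) = a := σ.symm_apply_apply a
      rwa [hσa] at h
    have hτa : τ a = a := by
      rw [hτdef, Equiv.Perm.mul_apply, hσinva, ha]
    have hτb : τ b = b := (hdis b).resolve_right hσb
    obtain ⟨hσ'c, hσ's⟩ := swap_mul_isCycle hσc hσa hσb
    have ha_supp : a ∉ σ.support := by simp [mem_support, hσa]
    have hcomm : Commute (swap a b) τ := by
      apply Equiv.Perm.Disjoint.commute
      intro x
      by_cases hxa : x = a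
      · right; rw [hxa, hτa]
      by_cases hxb : x = b
      · right; rw [hxb, hτb]
      · left; exact swap_apply_of_ne_of_ne hxa hxb
    have keyeq : swap a b * f = τ * (swap a b * σ) := by
      rw [hfeq, ← mul_assoc, hcomm.eq, mul_assoc]
    have hdis' : Disjoint τ (swap a b * σ) := by
      rw [disjoint_iff_disjoint_support, hσ's, Finset.disjoint_insert_right]
      refine ⟨by simp [mem_support, hτa], ?_⟩
      exact (disjoint_iff_disjoint_support.mp hdis)
    have hctf : f.cycleType = τ.cycleType + {σ.support.card} := by
      rw [hfeq, hdis.cycleType_mul, hσc.cycleType]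
    have hctg : (swap a b * f).cycleType = τ.cycleType + {σ.support.card + 1} := by
      rw [keyeq, hdis'.cycleType_mul, hσ'c.cycleType, hσ's,
        Finset.card_insert_of_notMem ha_supp]
    have hle := cyc_sum_le (swap a b * f)
    rw [hctg] at hle
    simp only [Multiset.sum_add, Multiset.sum_singleton] at hle
    unfold cyc
    rw [hctf, hctg]
    simp only [Multiset.card_add, Multiset.card_singleton, Multiset.sum_add,
      Multiset.sum_singleton]
    omega

end Aux

/-- `Fin n` is equivalent to the nonzero elements of `Fin (n+1)`. -/
def finSuccNeZeroEquiv (n : ℕ) : Fin n ≃ {x : Fin (n + 1) // x ≠ 0} where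
  toFun i := ⟨i.succ, Fin.succ_ne_zero i⟩
  invFun x := x.1.pred x.2
  left_inv i := by simp
  right_inv x := by simp

lemma decomposeFin_zero {n : ℕ} (e : Perm (Fin n)) :
    Equiv.Perm.decomposeFin.symm (0, e) = e.extendDomain (finSuccNeZeroEquiv n) := by
  refine Equiv.ext fun x => ?_
  refine Fin.cases ?_ (fun i => ?_) x
  · rw [Equiv.Perm.decomposeFin_symm_apply_zero,
      e.extendDomain_apply_not_subtype (finSuccNeZeroEquiv n) (by simp)]
  · rw [Equiv.Perm.decomposeFin_symm_apply_succ,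
      e.extendDomain_apply_subtype (finSuccNeZeroEquiv n) (Fin.succ_ne_zero i)]
    simp [finSuccNeZeroEquiv]

lemma cyc_decomposeFin_zero {n : ℕ} (e : Perm (Fin n)) :
    cyc (Equiv.Perm.decomposeFin.symm (0, e)) = cyc e + 1 := by
  have hct : (Equiv.Perm.decomposeFin.symm (0, e)).cycleType = e.cycleType := by
    rw [decomposeFin_zero]; exact cycleType_extendDomain _
  unfold cyc
  rw [hct, Fintype.card_fin, Fintype.card_fin]
  have := cyc_sum_le e
  rw [Fintype.card_fin] at this
  omega

lemma decomposeFin_eq {n : ℕ} (p : Fin (n + 1)) (e : Perm (Fin n)) :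
    Equiv.Perm.decomposeFin.symm (p, e) =
      swap 0 p * Equiv.Perm.decomposeFin.symm (0, e) := by
  refine Equiv.ext fun x => ?_
  refine Fin.cases ?_ (fun i => ?_) x
  · simp
  · simp

lemma cyc_decomposeFin_ne_zero {n : ℕ} {p : Fin (n + 1)} (hp : p ≠ 0) (e : Perm (Fin n)) :
    cyc (Equiv.Perm.decomposeFin.symm (p, e)) = cyc e := by
  have h := cyc_swap_mul (f := Equiv.Perm.decomposeFin.symm (0, e)) (a := (0 : Fin (n+1)))
    (b := p) (by simp) (Ne.symm hp)
  rw [← decomposeFin_eq, cyc_decomposeFin_zero] at h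
  omega

lemma sum_pow_cyc (n : ℕ) (z : ℝ) :
    ∑ g : Perm (Fin n), z ^ cyc g = ∏ j ∈ range n, (z + j) := by
  induction n with
  | zero => simp [cyc]
  | succ n ih =>
    have h1 : ∑ g : Perm (Fin (n + 1)), z ^ cyc g
        = ∑ pe : Fin (n + 1) × Perm (Fin n), z ^ cyc (Equiv.Perm.decomposeFin.symm pe) :=
      (Equiv.sum_comp Equiv.Perm.decomposeFin.symm (fun g => z ^ cyc g)).symm
    rw [h1, Fintype.sum_prod_type_right]
    have h2 : ∀ e : Perm (Fin n),
        ∑ p : Fin (n + 1), z ^ cyc (Equiv.Perm.decomposeFin.symm (p, e))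
          = z ^ (cyc e) * (z + n) := by
      intro e
      rw [← Finset.add_sum_erase _ _ (mem_univ (0 : Fin (n+1)))]
      rw [cyc_decomposeFin_zero]
      have h3 : ∀ p ∈ (univ : Finset (Fin (n+1))).erase 0,
          z ^ cyc (Equiv.Perm.decomposeFin.symm (p, e)) = z ^ cyc e := by
        intro p hp
        rw [cyc_decomposeFin_ne_zero (Finset.mem_erase.mp hp).1]
      rw [Finset.sum_congr rfl h3, Finset.sum_const, Finset.card_erase_of_mem (mem_univ _),
        Finset.card_univ, Fintype.card_fin]
      simp only [Nat.add_sub_cancel, nsmul_eq_mul]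
      ring
    rw [Finset.sum_congr rfl (fun e _ => h2 e), ← Finset.sum_mul, ih,
      Finset.prod_range_succ]

/-- **Tail bound for the number of cycles of a random permutation.**
For a uniformly random `g ∈ Sₙ` with `c(g)` cycles (fixed points included)
and every `ℓ ≥ 1`,
`Pr[c(g) ≥ 1 + ℓ·H_n] ≤ 2·e^{1 − (ℓ log ℓ − ℓ + 1)·H_n}`,
where `H_n = ∑_{j=1}^n 1/j` is the `n`-th harmonic number. -/
theorem cycle_count_tail_bound (n : ℕ) (ℓ : ℝ) (hℓ : 1 ≤ ℓ) :
    ((Finset.univ.filter fun g : Equiv.Perm (Fin n) =>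
        1 + ℓ * (∑ j ∈ Finset.Icc 1 n, (1 : ℝ) / j) ≤
          ((g.cycleType.card +
            (Finset.univ.filter fun x : Fin n => g x = x).card : ℕ) : ℝ)).card : ℝ) /
      (Nat.factorial n : ℝ) ≤
    2 * Real.exp (1 - (ℓ * Real.log ℓ - ℓ + 1) *
      (∑ j ∈ Finset.Icc 1 n, (1 : ℝ) / j)) := by
  have ℓpos : (0:ℝ) < ℓ := lt_of_lt_of_le one_pos hℓ
  have hc : ∀ g : Perm (Fin n),
      Multiset.card g.cycleType + (univ.filter fun x : Fin n => g x = x).card = cyc g := by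
    intro g
    have h1 : (univ.filter fun x : Fin n => g x = x) = univ \ g.support := by
      ext x
      simp [Equiv.Perm.mem_support]
    rw [h1, Finset.card_sdiff_of_subset (Finset.subset_univ _), Finset.card_univ, Fintype.card_fin]
    unfold cyc
    rw [Equiv.Perm.sum_cycleType, Fintype.card_fin]
  set H := ∑ j ∈ Finset.Icc 1 n, (1:ℝ)/j with hH
  have hH0 : 0 ≤ H := by
    rw [hH]; apply Finset.sum_nonneg; intro j _; positivity
  have hHr : H = ∑ j ∈ range n, (1:ℝ)/((j:ℝ)+1) := by
    rw [hH, ← Finset.Ico_add_one_right_eq_Icc, Finset.sum_Ico_eq_sum_range]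
    simp only [Nat.add_sub_cancel_left, Nat.succ_sub_one, add_tsub_cancel_right]
    refine Finset.sum_congr rfl fun i _ => ?_
    push_cast; ring
  set t : ℝ := 1 + ℓ * H with ht
  have hpt : (0:ℝ) < ℓ ^ t := Real.rpow_pos_of_pos ℓpos t
  set filt := (Finset.univ.filter fun g : Equiv.Perm (Fin n) =>
      1 + ℓ * H ≤ ((Multiset.card g.cycleType +
        (Finset.univ.filter fun x : Fin n => g x = x).card : ℕ) : ℝ)) with hfilt
  have hcount : (filt.card : ℝ) * ℓ ^ t ≤ ∑ g : Perm (Fin n), ℓ ^ cyc g := by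
    calc (filt.card : ℝ) * ℓ ^ t = ∑ _g ∈ filt, ℓ ^ t := by
          rw [Finset.sum_const, nsmul_eq_mul]
    _ ≤ ∑ g ∈ filt, ℓ ^ cyc g := by
          refine Finset.sum_le_sum fun g hg => ?_
          have hg' := (Finset.mem_filter.mp hg).2
          rw [hc g] at hg'
          calc ℓ ^ t ≤ ℓ ^ ((cyc g : ℕ) : ℝ) :=
                Real.rpow_le_rpow_of_exponent_le hℓ hg'
          _ = ℓ ^ cyc g := Real.rpow_natCast ℓ (cyc g)
    _ ≤ ∑ g : Perm (Fin n), ℓ ^ cyc g :=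
          Finset.sum_le_sum_of_subset_of_nonneg (Finset.subset_univ _)
            (fun g _ _ => pow_nonneg ℓpos.le _)
  have hfact : (n.factorial : ℝ) = ∏ j ∈ range n, ((j : ℝ) + 1) := by
    rw [← Finset.prod_range_add_one_eq_factorial]
    push_cast
    rfl
  have hprod : ∏ j ∈ range n, (ℓ + (j:ℝ)) ≤ (n.factorial : ℝ) * Real.exp ((ℓ - 1) * H) := by
    calc ∏ j ∈ range n, (ℓ + (j:ℝ))
        ≤ ∏ j ∈ range n, (((j:ℝ)+1) * Real.exp ((ℓ-1)/((j:ℝ)+1))) := by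
          refine Finset.prod_le_prod (fun j _ => by positivity) fun j _ => ?_
          have hj : (0:ℝ) < (j:ℝ)+1 := by positivity
          have h1 := Real.add_one_le_exp ((ℓ-1)/((j:ℝ)+1))
          calc ℓ + (j:ℝ) = ((j:ℝ)+1) * ((ℓ-1)/((j:ℝ)+1) + 1) := by field_simp; ring
          _ ≤ ((j:ℝ)+1) * Real.exp ((ℓ-1)/((j:ℝ)+1)) :=
                mul_le_mul_of_nonneg_left h1 hj.le
    _ = (n.factorial : ℝ) * Real.exp ((ℓ - 1) * H) := by
          rw [Finset.prod_mul_distrib, ← hfact, ← Real.exp_sum]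
          have hsum : ∑ x ∈ range n, (ℓ - 1) / ((x:ℝ) + 1) = (ℓ-1) * H := by
            rw [hHr, Finset.mul_sum]
            exact Finset.sum_congr rfl fun j _ => by ring
          rw [hsum]
  have hfpos : (0:ℝ) < (n.factorial : ℝ) := by
    exact_mod_cast Nat.cast_pos.mpr n.factorial_pos
  have hchain : (filt.card : ℝ) ≤ (n.factorial : ℝ) * Real.exp ((ℓ-1)*H) / ℓ ^ t := by
    rw [le_div_iff₀ hpt]
    exact hcount.trans (le_of_eq_of_le (sum_pow_cyc n ℓ) hprod)
  have hℓt : ℓ ^ t = Real.exp (Real.log ℓ * t) := Real.rpow_def_of_pos ℓpos t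
  have hexp : (n.factorial : ℝ) * Real.exp ((ℓ-1)*H) / ℓ ^ t
      ≤ (n.factorial : ℝ) * (2 * Real.exp (1 - (ℓ * Real.log ℓ - ℓ + 1) * H)) := by
    rw [hℓt, mul_div_assoc, ← Real.exp_sub]
    have hlog : 0 ≤ Real.log ℓ := Real.log_nonneg hℓ
    have hkey : (ℓ-1)*H - Real.log ℓ * t ≤ 1 - (ℓ * Real.log ℓ - ℓ + 1) * H := by
      have hid : (1 - (ℓ * Real.log ℓ - ℓ + 1) * H) -
          ((ℓ-1)*H - Real.log ℓ * (1 + ℓ * H)) = 1 + Real.log ℓ := by ring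
      rw [ht]
      linarith
    have h2 : Real.exp ((ℓ-1)*H - Real.log ℓ * t)
        ≤ 2 * Real.exp (1 - (ℓ * Real.log ℓ - ℓ + 1) * H) := by
      have := Real.exp_le_exp.mpr hkey
      have hp := Real.exp_pos (1 - (ℓ * Real.log ℓ - ℓ + 1) * H)
      linarith
    exact mul_le_mul_of_nonneg_left h2 hfpos.le
  rw [div_le_iff₀ hfpos]
  calc (filt.card : ℝ) ≤ (n.factorial : ℝ) * Real.exp ((ℓ-1)*H) / ℓ ^ t := hchain
  _ ≤ (n.factorial : ℝ) * (2 * Real.exp (1 - (ℓ * Real.log ℓ - ℓ + 1) * H)) := hexp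
  _ = 2 * Real.exp (1 - (ℓ * Real.log ℓ - ℓ + 1) * H) * (n.factorial : ℝ) := by ring
end
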